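/- For the Fibonacci-Narayana quaternions U_n in H(β₁,β₂), ∑_{m=0}^{n} U_{3m} = U_{3n+1} − 1 − e₄ for all n ≥ 0. -/

import Mathlib

open scoped Quaternion

/-- The Fibonacci-Narayana sequence. -/
def narayana : ℕ → ℤ
  | 0 => 0
  | 1 => 1
  | 2 => 1
  | n + 3 => narayana (n + 2) + narayana n

/-- The `n`th Fibonacci-Narayana quaternion in `H(β₁, β₂) = ℍ[ℝ, -β₁, -β₂]`. -/
def narayanaQuat (β₁ β₂ : ℝ) (n : ℕ) : ℍ[ℝ, -β₁, -β₂] :=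
  ⟨(narayana n : ℝ), (narayana (n + 1) : ℝ), (narayana (n + 2) : ℝ),
    (narayana (n + 3) : ℝ)⟩

lemma narayana_rec (m : ℕ) : narayana (m + 3) = narayana (m + 2) + narayana m := rfl

lemma narayana_key (a b c : ℕ) (hb : b = a + 2) (hc : c = a + 3) :
    (narayana a : ℝ) + narayana b = narayana c := by
  subst hb hc
  rw [narayana_rec]
  push_cast
  ring

lemma narayanaQuat_add_two (β₁ β₂ : ℝ) (m : ℕ) :
    narayanaQuat β₁ β₂ m + narayanaQuat β₁ β₂ (m + 2) = narayanaQuat β₁ β₂ (m + 3) := by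
  ext <;>
    simp only [narayanaQuat, QuaternionAlgebra.re_add, QuaternionAlgebra.imI_add,
      QuaternionAlgebra.imJ_add, QuaternionAlgebra.imK_add] <;>
    exact narayana_key _ _ _ (by omega) (by omega)

theorem narayanaQuat_sum_three_mul (β₁ β₂ : ℝ) (n : ℕ) :
    ∑ m ∈ Finset.range (n + 1), narayanaQuat β₁ β₂ (3 * m) =
      narayanaQuat β₁ β₂ (3 * n + 1) - 1 - (⟨0, 0, 0, 1⟩ : ℍ[ℝ, -β₁, -β₂]) := by
  induction n with
  | zero =>
      ext <;> norm_num [narayanaQuat, narayana]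
  | succ n ih =>
      rw [Finset.sum_range_succ, ih]
      have h := narayanaQuat_add_two β₁ β₂ (3 * n + 1)
      rw [show 3 * (n + 1) = 3 * n + 1 + 2 by ring,
        show 3 * n + 1 + 2 + 1 = 3 * n + 1 + 3 by ring, ← h]
      abel
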